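/- If ρ ≥ 0 satisfies |√(π_i/π̂_i) − 1| ≤ ρ and |√(π̂_i/π_i) − 1| ≤ ρ for all i, then the spectral norm difference between L = Diag(π)^{1/2} P Diag(π)^{-1/2} and L' = Diag(π̂)^{1/2} P Diag(π̂)^{-1/2} satisfies ‖L − L'‖ ≤ (2ρ + ρ²) ‖L‖. -/

import Mathlib

open Matrix

/-- The spectral (ℓ²-operator) norm of a real matrix. -/
noncomputable def specNorm {d : ℕ} (A : Matrix (Fin d) (Fin d) ℝ) : ℝ :=
  ‖LinearMap.toContinuousLinearMap (Matrix.toEuclideanLin A)‖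

open scoped Matrix.Norms.L2Operator

lemma specNorm_eq_norm {d : ℕ} (A : Matrix (Fin d) (Fin d) ℝ) : specNorm A = ‖A‖ := rfl

lemma norm_diagonal_le {d : ℕ} (v : Fin d → ℝ) (c : ℝ) (hc : 0 ≤ c)
    (h : ∀ i, |v i| ≤ c) : ‖(Matrix.diagonal v : Matrix (Fin d) (Fin d) ℝ)‖ ≤ c := by
  rw [Matrix.l2_opNorm_def]
  refine ContinuousLinearMap.opNorm_le_bound _ hc fun x => ?_
  have hx : Matrix.toEuclideanLin (Matrix.diagonal v) x =
      (WithLp.equiv 2 (Fin d → ℝ)).symm ((Matrix.diagonal v) *ᵥ (WithLp.equiv 2 (Fin d → ℝ)) x) :=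
    rfl
  show ‖Matrix.toEuclideanLin (Matrix.diagonal v) x‖ ≤ c * ‖x‖
  rw [hx]
  rw [EuclideanSpace.norm_eq, EuclideanSpace.norm_eq]
  rw [← Real.sqrt_sq hc, ← Real.sqrt_mul (by positivity)]
  apply Real.sqrt_le_sqrt
  rw [Finset.mul_sum]
  apply Finset.sum_le_sum
  intro i _
  have hmv : ((Matrix.diagonal v) *ᵥ (WithLp.equiv 2 (Fin d → ℝ)) x) i = v i * x i := by
    simp [Matrix.mulVec_diagonal]
  simp only [WithLp.equiv_symm_apply, WithLp.ofLp_toLp, hmv, Real.norm_eq_abs, sq_abs, mul_pow]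
  have h1 : v i ^ 2 ≤ c ^ 2 := by
    rw [← sq_abs]
    exact pow_le_pow_left₀ (abs_nonneg _) (h i) 2
  exact mul_le_mul_of_nonneg_right h1 (sq_nonneg _)

/-- If the square-root ratios of `π` and `π̂` deviate from 1 by at most `ρ`, then the two
diagonal conjugations of `P` satisfy `‖L - L'‖ ≤ (2ρ + ρ²)‖L‖` in spectral norm. -/
theorem conjugation_perturbation {d : ℕ} (P : Matrix (Fin d) (Fin d) ℝ)
    (π πh : Fin d → ℝ) (ρ : ℝ) (hρ : 0 ≤ ρ)
    (hπpos : ∀ i, 0 < π i) (hπhpos : ∀ i, 0 < πh i)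
    (hratio1 : ∀ i, |Real.sqrt (π i / πh i) - 1| ≤ ρ)
    (hratio2 : ∀ i, |Real.sqrt (πh i / π i) - 1| ≤ ρ)
    (L L' : Matrix (Fin d) (Fin d) ℝ)
    (hL : L = Matrix.diagonal (fun i => Real.sqrt (π i)) * P *
      Matrix.diagonal (fun i => (Real.sqrt (π i))⁻¹))
    (hL' : L' = Matrix.diagonal (fun i => Real.sqrt (πh i)) * P *
      Matrix.diagonal (fun i => (Real.sqrt (πh i))⁻¹)) :
    specNorm (L - L') ≤ (2 * ρ + ρ ^ 2) * specNorm L := by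
  have hsπ : ∀ i, Real.sqrt (π i) ≠ 0 := fun i =>
    ne_of_gt (Real.sqrt_pos.mpr (hπpos i))
  have hsπh : ∀ i, Real.sqrt (πh i) ≠ 0 := fun i =>
    ne_of_gt (Real.sqrt_pos.mpr (hπhpos i))
  set v₁ : Fin d → ℝ := fun i => Real.sqrt (πh i / π i) with hv₁
  set v₂ : Fin d → ℝ := fun i => Real.sqrt (π i / πh i) with hv₂
  set D₁ : Matrix (Fin d) (Fin d) ℝ := Matrix.diagonal v₁ with hD₁
  set D₂ : Matrix (Fin d) (Fin d) ℝ := Matrix.diagonal v₂ with hD₂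
  have hv₁eq : ∀ i, v₁ i = Real.sqrt (πh i) * (Real.sqrt (π i))⁻¹ := fun i => by
    show Real.sqrt (πh i / π i) = _
    rw [Real.sqrt_div (le_of_lt (hπhpos i)), div_eq_mul_inv]
  have hv₂eq : ∀ i, v₂ i = Real.sqrt (π i) * (Real.sqrt (πh i))⁻¹ := fun i => by
    show Real.sqrt (π i / πh i) = _
    rw [Real.sqrt_div (le_of_lt (hπpos i)), div_eq_mul_inv]
  have hfact : L' = D₁ * L * D₂ := by
    rw [hL, hL', hD₁, hD₂]
    rw [show Matrix.diagonal v₁ * (Matrix.diagonal (fun i => Real.sqrt (π i)) * P *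
        Matrix.diagonal (fun i => (Real.sqrt (π i))⁻¹)) * Matrix.diagonal v₂ =
        (Matrix.diagonal v₁ * Matrix.diagonal (fun i => Real.sqrt (π i))) * P *
        (Matrix.diagonal (fun i => (Real.sqrt (π i))⁻¹) * Matrix.diagonal v₂) by
      simp only [Matrix.mul_assoc]]
    rw [Matrix.diagonal_mul_diagonal, Matrix.diagonal_mul_diagonal]
    have e1 : (fun i => v₁ i * Real.sqrt (π i)) = fun i => Real.sqrt (πh i) := by
      funext i
      rw [hv₁eq i, inv_mul_cancel_right₀ (hsπ i)]
    have e2 : (fun i => (Real.sqrt (π i))⁻¹ * v₂ i) = fun i => (Real.sqrt (πh i))⁻¹ := by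
      funext i
      rw [hv₂eq i, inv_mul_cancel_left₀ (hsπ i)]
    rw [e1, e2]
  have hsplit : L - L' = (1 - D₁) * L + D₁ * L * (1 - D₂) := by
    rw [hfact]
    noncomm_ring
  have h1D₁ : ‖(1 : Matrix (Fin d) (Fin d) ℝ) - D₁‖ ≤ ρ := by
    have e : (1 : Matrix (Fin d) (Fin d) ℝ) - D₁ = Matrix.diagonal (fun i => 1 - v₁ i) := by
      rw [hD₁, ← Matrix.diagonal_one, Matrix.diagonal_sub]
    rw [e]
    exact norm_diagonal_le _ ρ hρ fun i => by
      rw [abs_sub_comm]; exact hratio2 i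
  have h1D₂ : ‖(1 : Matrix (Fin d) (Fin d) ℝ) - D₂‖ ≤ ρ := by
    have e : (1 : Matrix (Fin d) (Fin d) ℝ) - D₂ = Matrix.diagonal (fun i => 1 - v₂ i) := by
      rw [hD₂, ← Matrix.diagonal_one, Matrix.diagonal_sub]
    rw [e]
    exact norm_diagonal_le _ ρ hρ fun i => by
      rw [abs_sub_comm]; exact hratio1 i
  have hD₁n : ‖D₁‖ ≤ 1 + ρ := by
    refine norm_diagonal_le _ (1 + ρ) (by linarith) fun i => ?_
    calc |v₁ i| = |v₁ i - 1 + 1| := by ring_nf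
    _ ≤ |v₁ i - 1| + |(1 : ℝ)| := abs_add_le _ _
    _ ≤ ρ + 1 := by have := hratio2 i; simp only [abs_one]; linarith
    _ = 1 + ρ := by ring
  rw [specNorm_eq_norm, specNorm_eq_norm, hsplit]
  have hLnn : (0 : ℝ) ≤ ‖L‖ := norm_nonneg _
  calc ‖(1 - D₁) * L + D₁ * L * (1 - D₂)‖
      ≤ ‖(1 - D₁) * L‖ + ‖D₁ * L * (1 - D₂)‖ := norm_add_le _ _
    _ ≤ ‖1 - D₁‖ * ‖L‖ + ‖D₁ * L‖ * ‖1 - D₂‖ :=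
        add_le_add (Matrix.l2_opNorm_mul _ _) (Matrix.l2_opNorm_mul _ _)
    _ ≤ ρ * ‖L‖ + (‖D₁‖ * ‖L‖) * ρ := by
        apply add_le_add
        · exact mul_le_mul_of_nonneg_right h1D₁ hLnn
        · exact mul_le_mul (Matrix.l2_opNorm_mul _ _) h1D₂ (norm_nonneg _)
            (mul_nonneg (norm_nonneg _) hLnn)
    _ ≤ ρ * ‖L‖ + ((1 + ρ) * ‖L‖) * ρ := by
        have := mul_le_mul_of_nonneg_right (mul_le_mul_of_nonneg_right hD₁n hLnn) hρ
        linarith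
    _ = (2 * ρ + ρ ^ 2) * ‖L‖ := by ring
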